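/- Let T be a positive integer and S̃ : {1,...,T} → {0,1} a binary sequence. Define φ(S̃)[t] = Σ_{k=1}^{t} S̃[k]·(t − k + 1) and define the output sequence S : {1,...,T} → {0,1} by S[t] = 1 if φ(S̃)[t] = 1 and S[t] = 0 otherwise. Then S[t] = 1 if and only if t is the smallest index with S̃[t] = 1; consequently Σ_{t=1}^{T} S[t] ≤ 1, with equality if and only if S̃ is not identically zero. -/
import Mathlib


/-- The composition g∘φ retains exactly the first spike: with
φ(S̃)[t] = ∑_{k=1}^{t} S̃[k]·(t−k+1) and S[t] = 1 iff φ(S̃)[t] = 1, the output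
S[t] = 1 exactly at the smallest index with S̃ = 1, so ∑_t S[t] ≤ 1 with
equality iff S̃ is not identically zero. -/
theorem stmt_5 (T : ℕ) (hT : 0 < T) (St : ℕ → ℕ)
    (hSt : ∀ t ∈ Finset.Icc 1 T, St t = 0 ∨ St t = 1)
    (S : ℕ → ℕ)
    (hS : ∀ t, S t = if (∑ k ∈ Finset.Icc 1 t, St k * (t - k + 1)) = 1 then 1 else 0) :
    (∀ t ∈ Finset.Icc 1 T,
      (S t = 1 ↔ St t = 1 ∧ ∀ k, 1 ≤ k → k < t → St k ≠ 1)) ∧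
    (∑ t ∈ Finset.Icc 1 T, S t) ≤ 1 ∧
    ((∑ t ∈ Finset.Icc 1 T, S t) = 1 ↔ ∃ t ∈ Finset.Icc 1 T, St t = 1) := by
  have key : ∀ t ∈ Finset.Icc 1 T,
      ((∑ k ∈ Finset.Icc 1 t, St k * (t - k + 1)) = 1 ↔
        St t = 1 ∧ ∀ k, 1 ≤ k → k < t → St k ≠ 1) := by
    intro t ht
    rw [Finset.mem_Icc] at ht
    obtain ⟨s, rfl⟩ : ∃ s, t = s + 1 := ⟨t - 1, by omega⟩
    rw [Finset.sum_Icc_succ_top (by omega)]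
    constructor
    · intro hsum
      have hzero : ∀ k, 1 ≤ k → k < s + 1 → St k ≠ 1 := by
        intro k hk1 hkt hk
        have hmem : k ∈ Finset.Icc 1 s := Finset.mem_Icc.2 ⟨hk1, by omega⟩
        have hle : St k * (s + 1 - k + 1) ≤ ∑ k ∈ Finset.Icc 1 s, St k * (s + 1 - k + 1) :=
          Finset.single_le_sum (f := fun k => St k * (s + 1 - k + 1)) (fun i _ => Nat.zero_le _) hmem
        rw [hk, one_mul] at hle
        omega
      have hz : ∀ k ∈ Finset.Icc 1 s, St k * (s + 1 - k + 1) = 0 := by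
        intro k hk
        rw [Finset.mem_Icc] at hk
        rcases hSt k (Finset.mem_Icc.2 ⟨hk.1, by omega⟩) with h | h
        · simp [h]
        · exact absurd h (hzero k hk.1 (by omega))
      rw [Finset.sum_eq_zero hz] at hsum
      simp at hsum
      exact ⟨by omega, hzero⟩
    · rintro ⟨h1, hzero⟩
      have hz : ∀ k ∈ Finset.Icc 1 s, St k * (s + 1 - k + 1) = 0 := by
        intro k hk
        rw [Finset.mem_Icc] at hk
        rcases hSt k (Finset.mem_Icc.2 ⟨hk.1, by omega⟩) with h | h
        · simp [h]
        · exact absurd h (hzero k hk.1 (by omega))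
      rw [Finset.sum_eq_zero hz]
      simp [h1]
  have hiff : ∀ t ∈ Finset.Icc 1 T,
      (S t = 1 ↔ St t = 1 ∧ ∀ k, 1 ≤ k → k < t → St k ≠ 1) := by
    intro t ht
    rw [hS t, ← key t ht]
    split_ifs with h
    · simp [h]
    · simp [h]
  refine ⟨hiff, ?_⟩
  by_cases hex : ∃ t ∈ Finset.Icc 1 T, St t = 1
  · obtain ⟨t0, ht0, hst0⟩ := hex
    rw [Finset.mem_Icc] at ht0
    have hp : ∃ n, 1 ≤ n ∧ n ≤ T ∧ St n = 1 := ⟨t0, ht0.1, ht0.2, hst0⟩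
    set m := Nat.find hp with hmdef
    obtain ⟨hm1, hmT, hmSt⟩ := Nat.find_spec hp
    have hmmem : m ∈ Finset.Icc 1 T := Finset.mem_Icc.2 ⟨hm1, hmT⟩
    have hSm : S m = 1 := (hiff m hmmem).2
      ⟨hmSt, fun k hk1 hkm hk => Nat.find_min hp hkm ⟨hk1, by omega, hk⟩⟩
    have hsum : ∑ t ∈ Finset.Icc 1 T, S t = 1 := by
      rw [Finset.sum_eq_single_of_mem m hmmem, hSm]
      intro t ht hne
      have hS01 : S t = 0 ∨ S t = 1 := by rw [hS t]; split_ifs <;> simp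
      rcases hS01 with h0 | h1'
      · exact h0
      · exfalso
        obtain ⟨h1, hz⟩ := (hiff t ht).1 h1'
        rw [Finset.mem_Icc] at ht
        rcases Nat.lt_or_ge t m with h | h
        · exact Nat.find_min hp h ⟨ht.1, ht.2, h1⟩
        · exact hz m hm1 (by omega) hmSt
    refine ⟨by omega, ?_⟩
    rw [hsum]
    simp only [true_iff]
    exact ⟨t0, Finset.mem_Icc.2 ⟨ht0.1, ht0.2⟩, hst0⟩
  · have hall : ∀ t ∈ Finset.Icc 1 T, S t = 0 := by
      intro t ht
      rw [hS t]
      split_ifs with h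
      · obtain ⟨h1, _⟩ := (key t ht).1 h
        exact absurd ⟨t, ht, h1⟩ hex
      · rfl
    rw [Finset.sum_eq_zero hall]
    exact ⟨by omega, by simp; intro t h1 h2 h3; exact hex ⟨t, Finset.mem_Icc.2 ⟨h1, h2⟩, h3⟩⟩
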